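/- Let Λ be a totally ordered abelian group and (E, ∧) a rooted tree datum, i.e. a map ∧ : E × E → Λ ∪ {±∞} satisfying (RT0) x∧y ≥ 0, (RT1) x∧y = y∧x, (RT2) x∧z ≥ min{x∧y, y∧z} for all x,y,z ∈ E. On Σ = {(x,t) ∈ E × Λ : 0 ≤ t ≤ x∧x} define d((x,s),(y,t)) = |s − t| if s ≤ x∧y or t ≤ x∧y, and d((x,s),(y,t)) = |s − x∧y| + |t − x∧y| if s ≥ x∧y and t ≥ x∧y. Then d is a pseudometric on Σ: d is well-defined (the two cases agree on their overlap), nonnegative, symmetric, d((x,s),(x,s)) = 0, and satisfies the triangle inequality. -/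

import Mathlib

/-- For a rooted tree datum `(E, ∧)` with values in `Λ ∪ {±∞}`, the Alperin–Bass distance
`d` on `Σ = {(x,t) : 0 ≤ t ≤ x∧x}`, given by `|s − t|` when `s ≤ x∧y` or `t ≤ x∧y`, and by
`|s − x∧y| + |t − x∧y|` when `s, t ≥ x∧y`, is a well-defined pseudometric: the two cases
agree on their overlap, and `d` is nonnegative, symmetric, vanishes on the diagonal, and
satisfies the triangle inequality. -/
theorem stmt7 {Λ E : Type*} [AddCommGroup Λ] [LinearOrder Λ] [IsOrderedAddMonoid Λ]
    (wedge : E → E → WithBot (WithTop Λ))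
    (rt0 : ∀ x y, 0 ≤ wedge x y)
    (rt1 : ∀ x y, wedge x y = wedge y x)
    (rt2 : ∀ x y z, min (wedge x y) (wedge y z) ≤ wedge x z)
    (InSigma : E → Λ → Prop)
    (hSigma : ∀ x s, InSigma x s ↔
      0 ≤ s ∧ (((s : WithTop Λ) : WithBot (WithTop Λ)) ≤ wedge x x))
    (d : E → Λ → E → Λ → Λ)
    (hd1 : ∀ x s y t, InSigma x s → InSigma y t →
      (((s : WithTop Λ) : WithBot (WithTop Λ)) ≤ wedge x y ∨
        ((t : WithTop Λ) : WithBot (WithTop Λ)) ≤ wedge x y) →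
      d x s y t = |s - t|)
    (hd2 : ∀ x s y t (c : Λ), InSigma x s → InSigma y t →
      wedge x y = ((c : WithTop Λ) : WithBot (WithTop Λ)) → c ≤ s → c ≤ t →
      d x s y t = |s - c| + |t - c|) :
    (∀ (x : E) (s : Λ) (y : E) (t : Λ) (c : Λ), InSigma x s → InSigma y t →
      wedge x y = ((c : WithTop Λ) : WithBot (WithTop Λ)) →
      (s ≤ c ∨ t ≤ c) → c ≤ s → c ≤ t → |s - t| = |s - c| + |t - c|) ∧
    (∀ x s y t, InSigma x s → InSigma y t → 0 ≤ d x s y t) ∧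
    (∀ x s y t, InSigma x s → InSigma y t → d x s y t = d y t x s) ∧
    (∀ x s, InSigma x s → d x s x s = 0) ∧
    (∀ x s y t z u, InSigma x s → InSigma y t → InSigma z u →
      d x s z u ≤ d x s y t + d y t z u) := by
  -- Key lemma: a uniform description of d
  have key : ∀ x s y t, InSigma x s → InSigma y t → ∃ c : Λ, 0 ≤ c ∧ c ≤ s ∧ c ≤ t ∧
      d x s y t = (s - c) + (t - c) ∧
      ((c : WithTop Λ) : WithBot (WithTop Λ)) =
        min (min ((s : WithTop Λ) : WithBot (WithTop Λ))
          ((t : WithTop Λ) : WithBot (WithTop Λ))) (wedge x y) := by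
    intro x s y t hs ht
    obtain ⟨hs0, hsw⟩ := (hSigma x s).1 hs
    obtain ⟨ht0, htw⟩ := (hSigma y t).1 ht
    by_cases h : ((s : WithTop Λ) : WithBot (WithTop Λ)) ≤ wedge x y ∨
        ((t : WithTop Λ) : WithBot (WithTop Λ)) ≤ wedge x y
    · refine ⟨min s t, le_min hs0 ht0, min_le_left _ _, min_le_right _ _, ?_, ?_⟩
      · rw [hd1 x s y t hs ht h]
        rcases le_total s t with hst | hst
        · rw [abs_sub_comm, abs_of_nonneg (sub_nonneg.2 hst), min_eq_left hst]; abel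
        · rw [abs_of_nonneg (sub_nonneg.2 hst), min_eq_right hst]; abel
      · have hcast : (((min s t : Λ) : WithTop Λ) : WithBot (WithTop Λ)) =
            min ((s : WithTop Λ) : WithBot (WithTop Λ))
              ((t : WithTop Λ) : WithBot (WithTop Λ)) := by
          push_cast
          rfl
        rw [hcast]
        refine (min_eq_left ?_).symm
        rcases h with h | h
        · exact min_le_of_left_le h
        · exact min_le_of_right_le h
    · push_neg at h
      obtain ⟨h1, h2⟩ := h
      have hlt1 : wedge x y < ((s : WithTop Λ) : WithBot (WithTop Λ)) := h1
      have hlt2 : wedge x y < ((t : WithTop Λ) : WithBot (WithTop Λ)) := h2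
      have hbot : wedge x y ≠ ⊥ := by
        intro hb
        have h0 := rt0 x y
        rw [hb] at h0
        simp at h0
      obtain ⟨w, hw⟩ := WithBot.ne_bot_iff_exists.mp hbot
      have hwt : w ≠ ⊤ := by
        intro htop
        rw [← hw, htop] at hlt1
        have := WithBot.coe_lt_coe.mp hlt1
        exact absurd this (not_top_lt)
      obtain ⟨c, hc⟩ := WithTop.ne_top_iff_exists.mp hwt
      have hW : wedge x y = ((c : WithTop Λ) : WithBot (WithTop Λ)) := by
        rw [← hw, ← hc]
      rw [hW] at hlt1 hlt2
      have hcs : c < s := by exact_mod_cast hlt1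
      have hct : c < t := by exact_mod_cast hlt2
      have hc0 : 0 ≤ c := by
        have h0 := rt0 x y
        rw [hW] at h0
        exact_mod_cast h0
      refine ⟨c, hc0, hcs.le, hct.le, ?_, ?_⟩
      · rw [hd2 x s y t c hs ht hW hcs.le hct.le,
          abs_of_nonneg (sub_nonneg.2 hcs.le), abs_of_nonneg (sub_nonneg.2 hct.le)]
      · rw [hW]
        exact (min_eq_right (le_min hlt1.le hlt2.le)).symm
  refine ⟨?_, ?_, ?_, ?_, ?_⟩
  · intro x s y t c hx hy hW hor hcs hct
    rcases hor with h | h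
    · have : s = c := le_antisymm h hcs
      subst this
      simp [abs_sub_comm]
    · have : t = c := le_antisymm h hct
      subst this
      simp
  · intro x s y t hx hy
    obtain ⟨c, _, hcs, hct, hdc, _⟩ := key x s y t hx hy
    rw [hdc]
    exact add_nonneg (sub_nonneg.2 hcs) (sub_nonneg.2 hct)
  · intro x s y t hx hy
    obtain ⟨c, _, _, _, hdc, hmc⟩ := key x s y t hx hy
    obtain ⟨c', _, _, _, hdc', hmc'⟩ := key y t x s hy hx
    have hcc : ((c : WithTop Λ) : WithBot (WithTop Λ)) = ((c' : WithTop Λ) : WithBot (WithTop Λ)) := by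
      rw [hmc, hmc', rt1 x y, min_comm ((s : WithTop Λ) : WithBot (WithTop Λ))]
    have : c = c' := by exact_mod_cast hcc
    rw [hdc, hdc', this, add_comm]
  · intro x s hx
    have h := ((hSigma x s).1 hx).2
    rw [hd1 x s x s hx hx (Or.inl h)]
    simp
  · intro x s y t z u hx hy hz
    obtain ⟨c1, _, hc1s, hc1t, hd1', hm1⟩ := key x s y t hx hy
    obtain ⟨c2, _, hc2t, hc2u, hd2', hm2⟩ := key y t z u hy hz
    obtain ⟨c3, _, _, _, hd3', hm3⟩ := key x s z u hx hz
    have hmin : min c1 c2 ≤ c3 := by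
      have : (((min c1 c2 : Λ) : WithTop Λ) : WithBot (WithTop Λ)) ≤
          ((c3 : WithTop Λ) : WithBot (WithTop Λ)) := by
        rw [hm3]
        refine le_min (le_min ?_ ?_) ?_
        · have : min c1 c2 ≤ s := le_trans (min_le_left _ _) hc1s
          exact_mod_cast this
        · have : min c1 c2 ≤ u := le_trans (min_le_right _ _) hc2u
          exact_mod_cast this
        · have hcast : (((min c1 c2 : Λ) : WithTop Λ) : WithBot (WithTop Λ)) =
              min ((c1 : WithTop Λ) : WithBot (WithTop Λ))
                ((c2 : WithTop Λ) : WithBot (WithTop Λ)) := by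
            push_cast; rfl
          rw [hcast]
          refine le_trans (min_le_min ?_ ?_) (rt2 x y z)
          · rw [hm1]; exact min_le_right _ _
          · rw [hm2]; exact min_le_right _ _
      exact_mod_cast this
    have hmax : max c1 c2 ≤ t := max_le hc1t hc2t
    have hsum : c1 + c2 ≤ t + c3 := by
      rw [← min_add_max c1 c2, add_comm t c3]
      exact add_le_add hmin hmax
    have h6 : 0 ≤ t + c3 - (c1 + c2) := sub_nonneg.2 hsum
    rw [hd1', hd2', hd3', ← sub_nonneg]
    have e : (s - c1) + (t - c1) + ((t - c2) + (u - c2)) - ((s - c3) + (u - c3)) =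
        (t + c3 - (c1 + c2)) + (t + c3 - (c1 + c2)) := by abel
    rw [e]
    exact add_nonneg h6 h6
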